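/- arXiv:0804.0693 — 3 statements merged into one kernel-verified Lean document; each statement's English description precedes it below -/
import Mathlib

section
/- Let g(u) = u^2 - 2au + λ|u|^γ for u ∈ ℝ, where a ≠ 0, λ ≥ 0 and 0 < γ < 1, and let c_γ = (2/(2-γ)) · (2(1-γ)/(2-γ))^{1-γ}. Then 0 is the unique global minimizer of g over ℝ if and only if λ > c_γ |a|^{2-γ}. -/
open Real

private lemma key_eq (p b : ℝ) (hp0 : 0 < p) (hp1 : p < 1) (hb : 0 < b) :
    (2*b*p/(p+1)) ^ p * (2*b/(p+1)) = ((2/(p+1)) * (2*p/(p+1)) ^ p) * b ^ (p+1) := by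
  have hpp : 0 < p + 1 := by linarith
  have h1 : (2*b*p/(p+1)) ^ p = b ^ p * (2*p/(p+1)) ^ p := by
    rw [← Real.mul_rpow hb.le (by positivity)]
    congr 1
    field_simp
  have h2 : b ^ (p+1) = b ^ p * b := by
    rw [Real.rpow_add hb, Real.rpow_one]
  rw [h1, h2]; ring

private lemma key_le (p b u : ℝ) (hp0 : 0 < p) (hp1 : p < 1) (hb : 0 < b) (hu : 0 < u) :
    u ^ p * (2*b - u) ≤ ((2/(p+1)) * (2*p/(p+1)) ^ p) * b ^ (p+1) := by
  have hpp : 0 < p + 1 := by linarith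
  have hC : 0 < ((2/(p+1)) * (2*p/(p+1)) ^ p) * b ^ (p+1) := by positivity
  rcases le_or_gt (2*b) u with h | h
  · have h0 : u ^ p * (2*b - u) ≤ 0 :=
      mul_nonpos_of_nonneg_of_nonpos (Real.rpow_pos_of_pos hu p).le (by linarith)
    linarith
  · set x := 2*b*p/(p+1) with hx
    set y := 2*b/(p+1) with hy
    have hxpos : 0 < x := by positivity
    have hypos : 0 < y := by positivity
    have hv : 0 < 2*b - u := by linarith
    have amgm := Real.geom_mean_le_arith_mean2_weighted
      (w₁ := p/(p+1)) (w₂ := 1/(p+1)) (p₁ := u / x) (p₂ := (2*b-u)/y)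
      (by positivity) (by positivity) (by positivity) (by positivity)
      (by field_simp)
    have hsum : (p/(p+1)) * (u/x) + (1/(p+1)) * ((2*b-u)/y) = 1 := by
      rw [hx, hy]; field_simp; ring
    rw [hsum] at amgm
    have h2 : ((u/x)^(p/(p+1)) * ((2*b-u)/y)^(1/(p+1))) ^ (p+1) ≤ 1 := by
      calc ((u/x)^(p/(p+1)) * ((2*b-u)/y)^(1/(p+1))) ^ (p+1)
          ≤ (1:ℝ) ^ (p+1) := Real.rpow_le_rpow (by positivity) amgm (by linarith)
        _ = 1 := Real.one_rpow _
    have h3 : ((u/x)^(p/(p+1)) * ((2*b-u)/y)^(1/(p+1))) ^ (p+1)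
        = (u/x)^p * ((2*b-u)/y) := by
      rw [Real.mul_rpow (by positivity) (by positivity),
          ← Real.rpow_mul (by positivity), ← Real.rpow_mul (by positivity)]
      rw [show p/(p+1)*(p+1) = p by field_simp, show 1/(p+1)*(p+1) = 1 by field_simp,
          Real.rpow_one]
    rw [h3] at h2
    have h5 : u^p*(2*b-u) ≤ x^p * y := by
      rw [Real.div_rpow hu.le hxpos.le] at h2
      have h4 := mul_le_mul_of_nonneg_right h2 (by positivity : (0:ℝ) ≤ x^p*y)
      have hxp : 0 < x^p := Real.rpow_pos_of_pos hxpos p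
      calc u^p*(2*b-u) = (u^p/x^p * ((2*b-u)/y)) * (x^p*y) := by field_simp
        _ ≤ 1*(x^p*y) := h4
        _ = x^p*y := one_mul _
    calc u ^ p * (2*b - u) ≤ x^p * y := h5
      _ = ((2/(p+1)) * (2*p/(p+1)) ^ p) * b ^ (p+1) := key_eq p b hp0 hp1 hb

/-- Lemma 3 (Knight and Fu (2000)): for `g(u) = u² - 2au + λ|u|^γ` with `a ≠ 0`,
`λ ≥ 0` and `0 < γ < 1`, the point `0` is the unique global minimizer of `g`
over `ℝ` if and only if `λ > c_γ |a|^(2-γ)`, where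
`c_γ = (2/(2-γ)) (2(1-γ)/(2-γ))^(1-γ)`. -/
theorem bridge_univariate_zero_unique_min_iff
    (a lam gamma : ℝ) (ha : a ≠ 0) (hlam : 0 ≤ lam)
    (hgamma0 : 0 < gamma) (hgamma1 : gamma < 1)
    (g : ℝ → ℝ) (hg : ∀ u : ℝ, g u = u ^ 2 - 2 * a * u + lam * |u| ^ gamma)
    (c : ℝ)
    (hc : c = (2 / (2 - gamma)) * (2 * (1 - gamma) / (2 - gamma)) ^ (1 - gamma)) :
    (∀ u : ℝ, u ≠ 0 → g 0 < g u) ↔ lam > c * |a| ^ (2 - gamma) := by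
  set p := 1 - gamma with hp
  have hp0 : 0 < p := by simp [hp]; linarith
  have hp1 : p < 1 := by simp [hp]; linarith
  set b := |a| with hbdef
  have hb : 0 < b := abs_pos.mpr ha
  have h2g : (2:ℝ) - gamma = p + 1 := by rw [hp]; ring
  have hc' : c = (2/(p+1)) * (2*p/(p+1)) ^ p := by
    rw [hc, hp, ← h2g]
  have hcb : c * |a| ^ (2 - gamma) = ((2/(p+1)) * (2*p/(p+1)) ^ p) * b ^ (p+1) := by
    rw [hc', h2g, hbdef]
  have hg0 : g 0 = 0 := by
    rw [hg 0]
    simp [Real.zero_rpow hgamma0.ne']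
  constructor
  · intro H
    set x := 2*b*p/(p+1) with hxdef
    have hpp : 0 < p + 1 := by linarith
    have hxpos : 0 < x := by positivity
    set u0 : ℝ := if 0 < a then x else -x with hu0def
    have hu0ne : u0 ≠ 0 := by
      rcases lt_or_ge 0 a with h | h
      · simp [hu0def, h]; exact hxpos.ne'
      · simp [hu0def, not_lt.mpr h]; exact hxpos.ne'
    have hau : a * u0 = b * x := by
      rcases lt_or_ge 0 a with h | h
      · simp [hu0def, h, hbdef, abs_of_pos h]
      · have h' : a < 0 := lt_of_le_of_ne h ha
        simp [hu0def, not_lt.mpr h, hbdef, abs_of_neg h']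
    have habs : |u0| = x := by
      rcases lt_or_ge 0 a with h | h
      · simp [hu0def, h, abs_of_pos hxpos]
      · simp [hu0def, not_lt.mpr h, abs_of_pos hxpos]
    have hsq : u0 ^ 2 = x ^ 2 := by
      rcases lt_or_ge 0 a with h | h
      · simp [hu0def, h]
      · simp [hu0def, not_lt.mpr h]
    have hH := H u0 hu0ne
    rw [hg0, hg u0, hsq, habs] at hH
    have hH' : 2*b*x - x^2 < lam * x ^ gamma := by nlinarith [hH, hau]
    have hy : 2*b - x = 2*b/(p+1) := by rw [hxdef]; field_simp; ring
    have hvv : x ^ gamma * x ^ p = x := by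
      rw [← Real.rpow_add hxpos, show gamma + p = 1 by rw [hp]; ring, Real.rpow_one]
    have heq : 2*b*x - x^2 = x ^ gamma * (((2/(p+1)) * (2*p/(p+1)) ^ p) * b ^ (p+1)) := by
      calc 2*b*x - x^2 = (x ^ gamma * x ^ p) * (2*b - x) := by rw [hvv]; ring
        _ = x ^ gamma * (x ^ p * (2*b - x)) := by ring
        _ = x ^ gamma * (((2/(p+1)) * (2*p/(p+1)) ^ p) * b ^ (p+1)) := by
            rw [hy, key_eq p b hp0 hp1 hb]
    rw [heq] at hH'
    have hxg : 0 < x ^ gamma := Real.rpow_pos_of_pos hxpos gamma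
    rw [hcb]
    have hH'' : x ^ gamma * (((2/(p+1)) * (2*p/(p+1)) ^ p) * b ^ (p+1)) < x ^ gamma * lam := by
      linarith [hH']
    exact (mul_lt_mul_iff_right₀ hxg).mp hH''
  · intro hl u hu
    rw [hg0, hg u]
    rcases le_or_gt (a*u) 0 with h | h
    · have h2 : 0 < u ^ 2 := by
        rw [← sq_abs]; exact pow_pos (abs_pos.mpr hu) 2
      have h3 : 0 ≤ lam * |u| ^ gamma := by positivity
      nlinarith
    · set v := |u| with hvdef
      have hv : 0 < v := abs_pos.mpr hu
      have hbv : a * u = b * v := by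
        rw [hbdef, hvdef, ← abs_mul, abs_of_pos h]
      have hsq : u ^ 2 = v ^ 2 := (sq_abs u).symm
      have k := key_le p b v hp0 hp1 hb hv
      have hvv : v ^ gamma * v ^ p = v := by
        rw [← Real.rpow_add hv, show gamma + p = 1 by rw [hp]; ring, Real.rpow_one]
      have hvg : 0 < v ^ gamma := Real.rpow_pos_of_pos hv gamma
      have hcl : ((2/(p+1)) * (2*p/(p+1)) ^ p) * b ^ (p+1) < lam := by
        rw [hcb] at hl; exact hl
      have chain : 2*b*v - v^2 < lam * v ^ gamma := by
        calc 2*b*v - v^2 = v ^ gamma * (v ^ p * (2*b - v)) := by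
              rw [← mul_assoc, hvv]; ring
          _ ≤ v ^ gamma * (((2/(p+1)) * (2*p/(p+1)) ^ p) * b ^ (p+1)) :=
              mul_le_mul_of_nonneg_left k hvg.le
          _ < v ^ gamma * lam := (mul_lt_mul_iff_right₀ hvg).mpr hcl
          _ = lam * v ^ gamma := mul_comm _ _
      rw [hsq, hvdef] at *
      nlinarith [chain, hbv]
end

section
/- Consider the linear model Y_i = x_i' β_0 + ε_i, i = 1, …, n, where x_1, …, x_n ∈ ℝ^p are fixed, ε_1, …, ε_n are independent real random variables with mean zero and variance σ^2 ∈ (0, ∞), and Σ_n = n^{-1} Σ_{i=1}^n x_i x_i' is positive definite. Let β̂ be any (measurable) global minimizer of the bridge objective L(β) = Σ_{i=1}^n (Y_i − x_i' β)^2 + λ Σ_{j=1}^p |β_j|^γ with λ ≥ 0 and γ > 0, and let η = λ Σ_{j=1}^p |β_{0j}|^γ. Then n · E[ (β̂ − β_0)' Σ_n (β̂ − β_0) ] ≤ 6 σ^2 p + 3 η. -/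
open MeasureTheory ProbabilityTheory
open Matrix

lemma bridge_bilin_eq {n p : ℕ} (x : Fin n → Fin p → ℝ) (z y : Fin p → ℝ) :
    ∑ i, (∑ a, x i a * z a) * (∑ b, x i b * y b)
      = z ⬝ᵥ ((Matrix.of fun a b => ∑ i, x i a * x i b) *ᵥ y) := by
  simp only [dotProduct, Matrix.mulVec, Matrix.of_apply, Finset.sum_mul,
    Finset.mul_sum]
  conv_lhs => rw [Finset.sum_comm]
  conv_lhs => enter [2,b]; rw [Finset.sum_comm]
  conv_lhs => rw [Finset.sum_comm]
  exact Finset.sum_congr rfl fun a _ => Finset.sum_congr rfl fun b _ =>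
    Finset.sum_congr rfl fun i _ => by ring

lemma bridge_inv_dot_eq {p : ℕ} (M : Matrix (Fin p) (Fin p) ℝ) (hsymm : Mᵀ = M)
    (hdet : IsUnit M.det) (v y : Fin p → ℝ) :
    (M⁻¹ *ᵥ v) ⬝ᵥ (M *ᵥ y) = v ⬝ᵥ y := by
  rw [dotProduct_mulVec, ← Matrix.mulVec_transpose, hsymm,
    Matrix.mulVec_mulVec, Matrix.mul_nonsing_inv _ hdet, Matrix.one_mulVec]

set_option maxHeartbeats 1000000 in
/-- Inequality (9): in the linear model `Yᵢ = xᵢ'β₀ + εᵢ` with independent errors of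
mean zero and variance `σ²` and positive definite Gram matrix `Σₙ = n⁻¹ ∑ᵢ xᵢxᵢ'`,
any global minimizer `β̂` of the bridge objective
`L(β) = ∑ᵢ (Yᵢ − xᵢ'β)² + λ ∑ⱼ |βⱼ|^γ` satisfies
`n E[(β̂ − β₀)' Σₙ (β̂ − β₀)] ≤ 6σ²p + 3η` where `η = λ ∑ⱼ |β₀ⱼ|^γ`. -/
theorem bridge_quadratic_risk_bound
    {Ω : Type*} [MeasurableSpace Ω] (μ : Measure Ω) [IsProbabilityMeasure μ]
    (n p : ℕ) (hn : 0 < n)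
    (ε : Fin n → Ω → ℝ) (σ : ℝ) (hσ : 0 < σ)
    (hmeas : ∀ i, Measurable (ε i))
    (hindep : iIndepFun ε μ)
    (hmean : ∀ i, ∫ ω, ε i ω ∂μ = 0)
    (hvar : ∀ i, ∫ ω, (ε i ω) ^ 2 ∂μ = σ ^ 2)
    (x : Fin n → Fin p → ℝ)
    (Sn : Matrix (Fin p) (Fin p) ℝ)
    (hSn : ∀ a b, Sn a b = (n : ℝ)⁻¹ * ∑ i, x i a * x i b)
    (hSpos : Sn.PosDef)
    (β0 : Fin p → ℝ) (lam gamma : ℝ) (hlam : 0 ≤ lam) (hgamma : 0 < gamma)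
    (Y : Fin n → Ω → ℝ)
    (hY : ∀ i ω, Y i ω = (∑ j, x i j * β0 j) + ε i ω)
    (βhat : Ω → Fin p → ℝ)
    (hβmeas : Measurable βhat)
    (hβmin : ∀ᵐ ω ∂μ, ∀ β : Fin p → ℝ,
      (∑ i, (Y i ω - ∑ j, x i j * βhat ω j) ^ 2 + lam * ∑ j, |βhat ω j| ^ gamma)
        ≤ ∑ i, (Y i ω - ∑ j, x i j * β j) ^ 2 + lam * ∑ j, |β j| ^ gamma)
    (η : ℝ) (hη : η = lam * ∑ j, |β0 j| ^ gamma) :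
    (n : ℝ) * ∫ ω, (∑ a, ∑ b, (βhat ω a - β0 a) * Sn a b * (βhat ω b - β0 b)) ∂μ
      ≤ 6 * σ ^ 2 * p + 3 * η := by
  classical
  have hn' : (0:ℝ) < n := by exact_mod_cast hn
  have hη0 : 0 ≤ η := by
    rw [hη]
    exact mul_nonneg hlam
      (Finset.sum_nonneg fun j _ => Real.rpow_nonneg (abs_nonneg _) _)
  -- the matrix M = X'X = n • Sn
  set M : Matrix (Fin p) (Fin p) ℝ := Matrix.of fun a b => ∑ i, x i a * x i b with hMdef
  have hMapp : ∀ a b, M a b = ∑ i, x i a * x i b := fun a b => rfl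
  have hMsn : ∀ a b, M a b = (n:ℝ) * Sn a b := by
    intro a b
    rw [hSn a b, hMapp, ← mul_assoc, mul_inv_cancel₀ hn'.ne', one_mul]
  have hMeq : M = (n:ℝ) • Sn := by
    ext a b; simp [hMsn a b]
  have hMsymm : Mᵀ = M := by
    ext a b
    simp only [Matrix.transpose_apply, hMapp]
    exact Finset.sum_congr rfl fun i _ => mul_comm _ _
  have hMdet : IsUnit M.det := by
    rw [hMeq, Matrix.det_smul, Fintype.card_fin]
    exact (mul_pos (pow_pos hn' p) hSpos.det_pos).ne'.isUnit
  set N : Matrix (Fin p) (Fin p) ℝ := M⁻¹ with hNdef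
  have hNM : N * M = 1 := Matrix.nonsing_inv_mul M hMdet
  -- quadratic form identity
  have hquad : ∀ z : Fin p → ℝ, ∑ i, (∑ a, x i a * z a) ^ 2 = z ⬝ᵥ (M *ᵥ z) := by
    intro z
    rw [hMdef]
    simpa only [pow_two] using bridge_bilin_eq x z z
  -- the error vector v = X'ε and the quadratic functional R
  set v : Ω → Fin p → ℝ := fun ω a => ∑ i, ε i ω * x i a with hv
  set R : Ω → ℝ := fun ω => v ω ⬝ᵥ (N *ᵥ v ω) with hR
  -- the deterministic identity :  n * (integrand) = δ' M δ
  have hnf : ∀ ω, (n:ℝ) * (∑ a, ∑ b, (βhat ω a - β0 a) * Sn a b * (βhat ω b - β0 b))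
      = (fun j => βhat ω j - β0 j) ⬝ᵥ (M *ᵥ fun j => βhat ω j - β0 j) := by
    intro ω
    simp only [dotProduct, Matrix.mulVec, Finset.mul_sum]
    refine Finset.sum_congr rfl fun a _ => Finset.sum_congr rfl fun b _ => ?_
    rw [hMsn a b]; ring
  -- pointwise (a.e.) inequality
  have hpt : ∀ᵐ ω ∂μ,
      (n:ℝ) * (∑ a, ∑ b, (βhat ω a - β0 a) * Sn a b * (βhat ω b - β0 b))
        ≤ (9/2) * R ω + 3 * η := by
    filter_upwards [hβmin] with ω hmin
    set d : Fin p → ℝ := fun j => βhat ω j - β0 j with hd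
    set t : Fin n → ℝ := fun i => ∑ j, x i j * d j with htdef
    have ht : ∀ i, t i = ∑ j, x i j * d j := fun i => rfl
    -- basic inequality from minimality at β0
    have hres : ∀ i, Y i ω - ∑ j, x i j * βhat ω j = ε i ω - t i := by
      intro i
      have h2 : t i = ∑ j, x i j * βhat ω j - ∑ j, x i j * β0 j := by
        rw [ht]
        simp only [hd, mul_sub, Finset.sum_sub_distrib]
      rw [hY i ω, h2]; ring
    have hA : ∑ i, t i ^ 2 ≤ 2 * ∑ i, ε i ω * t i + η := by
      have hpen : 0 ≤ lam * ∑ j, |βhat ω j| ^ gamma :=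
        mul_nonneg hlam
          (Finset.sum_nonneg fun j _ => Real.rpow_nonneg (abs_nonneg _) _)
      have h1 := hmin β0
      simp only [hres] at h1
      have h2 : ∀ i, Y i ω - ∑ j, x i j * β0 j = ε i ω := fun i => by rw [hY i ω]; ring
      simp only [h2] at h1
      rw [← hη] at h1
      have hexp : ∑ i, (ε i ω - t i) ^ 2
          = ∑ i, ε i ω ^ 2 - 2 * ∑ i, ε i ω * t i + ∑ i, t i ^ 2 := by
        have hterm : ∀ i ∈ Finset.univ, (ε i ω - t i) ^ 2
            = ε i ω ^ 2 - 2 * (ε i ω * t i) + t i ^ 2 := fun i _ => by ring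
        rw [Finset.sum_congr rfl hterm, Finset.sum_add_distrib,
          Finset.sum_sub_distrib, ← Finset.mul_sum]
      rw [hexp] at h1
      linarith
    -- replace ε by its projection u onto the column space
    set w : Fin p → ℝ := N *ᵥ v ω with hw
    set u : Fin n → ℝ := fun i => ∑ a, x i a * w a with hu
    have hB : ∑ i, ε i ω * t i = ∑ i, u i * t i := by
      have h1 : ∑ i, ε i ω * t i = ∑ j, v ω j * d j := by
        simp only [ht, hv, Finset.mul_sum, Finset.sum_mul]
        rw [Finset.sum_comm]
        exact Finset.sum_congr rfl fun j _ => Finset.sum_congr rfl fun i _ => by ring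
      have h2 : ∑ i, u i * t i = w ⬝ᵥ (M *ᵥ d) := by
        rw [hMdef]
        exact bridge_bilin_eq x w d
      have h3 : w ⬝ᵥ (M *ᵥ d) = v ω ⬝ᵥ d := by
        rw [hw, hNdef]
        exact bridge_inv_dot_eq M hMsymm hMdet (v ω) d
      rw [h1, h2, h3, dotProduct]
    have hC : ∑ i, u i ^ 2 = R ω := by
      have h2 : ∑ i, u i ^ 2 = w ⬝ᵥ (M *ᵥ w) := by
        rw [hMdef]
        simpa only [pow_two] using bridge_bilin_eq x w w
      rw [h2, hR]
      rw [hw, hNdef]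
      exact bridge_inv_dot_eq M hMsymm hMdet (v ω) w
    have hCS : (∑ i, u i * t i) ^ 2 ≤ (∑ i, u i ^ 2) * (∑ i, t i ^ 2) :=
      Finset.sum_mul_sq_le_sq_mul_sq _ _ _
    have hs0 : 0 ≤ ∑ i, t i ^ 2 := Finset.sum_nonneg fun i _ => sq_nonneg _
    have hr0 : 0 ≤ R ω := hC ▸ Finset.sum_nonneg fun i _ => sq_nonneg _
    have hgoal : ∑ i, t i ^ 2 ≤ (9/2) * R ω + 3 * η := by
      rw [hB] at hA
      rw [hC] at hCS
      nlinarith [sq_nonneg (2 * (∑ i, t i ^ 2) - 3 * (∑ i, u i * t i)), hs0, hr0,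
        hη0, hA, hCS]
    calc (n:ℝ) * (∑ a, ∑ b, (βhat ω a - β0 a) * Sn a b * (βhat ω b - β0 b))
        = d ⬝ᵥ (M *ᵥ d) := hnf ω
      _ = ∑ i, t i ^ 2 := (hquad d).symm
      _ ≤ (9/2) * R ω + 3 * η := hgoal
  -- integrability of the errors and their products
  have hsqint : ∀ i, Integrable (fun ω => ε i ω ^ 2) μ := by
    intro i
    by_contra h
    have h2 := hvar i
    rw [integral_undef h] at h2
    exact (pow_pos hσ 2).ne h2
  have hεint : ∀ i, Integrable (ε i) μ := by
    intro i
    refine Integrable.mono' (g := fun ω => (1 + ε i ω ^ 2) / 2)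
      (((integrable_const (1:ℝ)).add (hsqint i)).div_const 2)
      (hmeas i).aestronglyMeasurable ?_
    filter_upwards with ω
    rw [Real.norm_eq_abs]
    nlinarith [sq_nonneg (|ε i ω| - 1), sq_abs (ε i ω)]
  have hprodint : ∀ i j, Integrable (fun ω => ε i ω * ε j ω) μ := by
    intro i j
    refine Integrable.mono' (g := fun ω => (ε i ω ^ 2 + ε j ω ^ 2) / 2)
      (((hsqint i).add (hsqint j)).div_const 2)
      ((hmeas i).mul (hmeas j)).aestronglyMeasurable ?_
    filter_upwards with ω
    rw [Real.norm_eq_abs, abs_mul]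
    nlinarith [sq_nonneg (|ε i ω| - |ε j ω|), sq_abs (ε i ω), sq_abs (ε j ω),
      abs_nonneg (ε i ω), abs_nonneg (ε j ω)]
  have hcov : ∀ i j, ∫ ω, ε i ω * ε j ω ∂μ = if i = j then σ ^ 2 else 0 := by
    intro i j
    by_cases hij : i = j
    · subst hij
      simp only [if_pos rfl]
      rw [← hvar i]
      have : (fun ω => ε i ω * ε i ω) = fun ω => ε i ω ^ 2 := by
        funext ω; rw [pow_two]
      show (∫ ω, ε i ω * ε i ω ∂μ) = _
      rw [this]
      simp
    · simp only [if_neg hij]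
      have hind : IndepFun (ε i) (ε j) μ := hindep.indepFun hij
      have h1 := hind.integral_mul_eq_mul_integral (hεint i).aestronglyMeasurable (hεint j).aestronglyMeasurable
      have h2 : ∫ ω, ε i ω * ε j ω ∂μ = ∫ ω, (ε i * ε j) ω ∂μ := rfl
      rw [h2]
      rw [h1, hmean i, hmean j, mul_zero]
  -- integral of products of v
  have hvform : ∀ a b, (fun ω => v ω a * v ω b)
      = fun ω => ∑ i, ∑ j, (x i a * x j b) * (ε i ω * ε j ω) := by
    intro a b
    funext ω
    simp only [hv, Finset.sum_mul, Finset.mul_sum]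
    conv_lhs => rw [Finset.sum_comm]
    exact Finset.sum_congr rfl fun i _ => Finset.sum_congr rfl fun j _ => by ring
  have hvint : ∀ a b, Integrable (fun ω => v ω a * v ω b) μ := by
    intro a b
    rw [hvform a b]
    exact integrable_finset_sum _ fun i _ => integrable_finset_sum _ fun j _ =>
      (hprodint i j).const_mul _
  have hvval : ∀ a b, ∫ ω, v ω a * v ω b ∂μ = σ ^ 2 * M a b := by
    intro a b
    have h0 : ∫ ω, v ω a * v ω b ∂μ
        = ∫ ω, ∑ i, ∑ j, (x i a * x j b) * (ε i ω * ε j ω) ∂μ := by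
      rw [← hvform a b]
    rw [h0, integral_finset_sum _ (fun i _ => integrable_finset_sum _ fun j _ =>
      (hprodint i j).const_mul _)]
    have h1 : ∀ i, ∫ ω, ∑ j, (x i a * x j b) * (ε i ω * ε j ω) ∂μ
        = ∑ j, (x i a * x j b) * ∫ ω, ε i ω * ε j ω ∂μ := by
      intro i
      rw [integral_finset_sum _ (fun j _ => (hprodint i j).const_mul _)]
      exact Finset.sum_congr rfl fun j _ => integral_const_mul _ _
    simp only [h1, hcov]
    have h2 : ∀ i, ∑ j, (x i a * x j b) * (if i = j then σ ^ 2 else 0)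
        = x i a * x i b * σ ^ 2 := by
      intro i
      rw [Finset.sum_eq_single i]
      · simp
      · intro j _ hji
        simp [Ne.symm hji]
      · simp
    simp only [h2]
    rw [hMapp, Finset.mul_sum]
    exact Finset.sum_congr rfl fun i _ => by ring
  -- integral of R
  have hReq : R = fun ω => ∑ a, ∑ b, N a b * (v ω a * v ω b) := by
    funext ω
    simp only [hR, dotProduct, Matrix.mulVec, Finset.mul_sum]
    exact Finset.sum_congr rfl fun a _ => Finset.sum_congr rfl fun b _ => by ring
  have hRint : Integrable R μ := by
    rw [hReq]
    exact integrable_finset_sum _ fun a _ => integrable_finset_sum _ fun b _ =>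
      (hvint a b).const_mul _
  have hRval : ∫ ω, R ω ∂μ = σ ^ 2 * p := by
    rw [hReq]
    beta_reduce
    rw [integral_finset_sum _ (fun a _ => integrable_finset_sum _ fun b _ =>
      (hvint a b).const_mul (N a b))]
    have h1 : ∀ a, ∫ ω, ∑ b, N a b * (v ω a * v ω b) ∂μ
        = ∑ b, N a b * (σ ^ 2 * M a b) := by
      intro a
      rw [integral_finset_sum _ (fun b _ => (hvint a b).const_mul _)]
      exact Finset.sum_congr rfl fun b _ => by rw [integral_const_mul, hvval a b]
    simp only [h1]
    have h2 : ∀ a, ∑ b, N a b * (σ ^ 2 * M a b) = σ ^ 2 * ((N * M) a a) := by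
      intro a
      rw [Matrix.mul_apply, Finset.mul_sum]
      refine Finset.sum_congr rfl fun b _ => ?_
      have : M a b = M b a := by
        rw [hMapp, hMapp]
        exact Finset.sum_congr rfl fun i _ => mul_comm _ _
      rw [this]; ring
    simp only [h2, hNM, Matrix.one_apply_eq]
    simp [mul_comm]
  -- measurability of the integrand
  set f : Ω → ℝ := fun ω => ∑ a, ∑ b, (βhat ω a - β0 a) * Sn a b * (βhat ω b - β0 b)
    with hfdef
  have hfmeas : Measurable f := by
    apply Finset.measurable_sum
    intro a _
    apply Finset.measurable_sum
    intro b _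
    have ha : Measurable fun ω => βhat ω a := (measurable_pi_apply a).comp hβmeas
    have hb : Measurable fun ω => βhat ω b := (measurable_pi_apply b).comp hβmeas
    exact ((ha.sub measurable_const).mul_const _).mul (hb.sub measurable_const)
  have hfnonneg : ∀ ω, 0 ≤ (n:ℝ) * f ω := by
    intro ω
    simp only [hfdef]
    rw [hnf ω, ← hquad]
    exact Finset.sum_nonneg fun i _ => sq_nonneg _
  have hbint : Integrable (fun ω => (9/2) * R ω + 3 * η) μ :=
    (hRint.const_mul _).add (integrable_const _)
  have hnfint : Integrable (fun ω => (n:ℝ) * f ω) μ := by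
    refine Integrable.mono' hbint (hfmeas.const_mul _).aestronglyMeasurable ?_
    filter_upwards [hpt] with ω h
    rw [Real.norm_eq_abs, abs_of_nonneg (hfnonneg ω)]
    exact h
  have hstep : ∫ ω, (n:ℝ) * f ω ∂μ ≤ ∫ ω, ((9/2) * R ω + 3 * η) ∂μ :=
    integral_mono_ae hnfint hbint hpt
  have hrhs : ∫ ω, ((9/2) * R ω + 3 * η) ∂μ = (9/2) * (σ ^ 2 * p) + 3 * η := by
    rw [integral_add (hRint.const_mul _) (integrable_const _), integral_const_mul,
      hRval, integral_const]
    simp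
  have hlhs : (n:ℝ) * ∫ ω, f ω ∂μ = ∫ ω, (n:ℝ) * f ω ∂μ := (integral_const_mul _ _).symm
  rw [hlhs]
  have hfin : (9/2) * (σ ^ 2 * p) + 3 * η ≤ 6 * σ ^ 2 * p + 3 * η := by
    nlinarith [mul_nonneg (sq_nonneg σ) (Nat.cast_nonneg p : (0:ℝ) ≤ (p:ℝ))]
  calc (∫ ω, (n:ℝ) * f ω ∂μ) ≤ ∫ ω, ((9/2) * R ω + 3 * η) ∂μ := hstep
    _ = (9/2) * (σ ^ 2 * p) + 3 * η := hrhs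
    _ ≤ 6 * σ ^ 2 * p + 3 * η := hfin
end

section
/- (Theorem 3, nonzero-coefficient part.) Under conditions (B1)–(B4) and 0 < γ < 1, the marginal bridge estimator β̃_n, a measurable global minimizer of U_n(β) = Σ_{j=1}^{p_n} Σ_{i=1}^n (Y_i − x_{ij} β_j)^2 + λ_n Σ_{j=1}^{p_n} |β_j|^γ, satisfies P( β̃_{nk} ≠ 0 for every k ∈ K_n ) → 1 as n → ∞, where K_n = {1, …, k_n} is the index set of the nonzero coefficients. -/
open MeasureTheory ProbabilityTheory Filter
open scoped ENNReal NNReal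

lemma cheb_aux {Ω : Type*} [MeasurableSpace Ω] (μ : Measure Ω) [IsProbabilityMeasure μ]
    (n : ℕ) (c : Fin n → ℝ) (ε : ℕ → Ω → ℝ) (σ : ℝ) (hσ : 0 < σ)
    (hmeas : ∀ i, Measurable (ε i))
    (hindep : iIndepFun ε μ)
    (hmean : ∀ i, ∫ ω, ε i ω ∂μ = 0)
    (hvar : ∀ i, variance (ε i) μ = σ ^ 2)
    (r : ℝ) (hr : 0 < r) :
    μ {ω | r ≤ |∑ i : Fin n, c i * ε i ω|}
      ≤ ENNReal.ofReal ((∑ i : Fin n, (c i) ^ 2) * σ ^ 2 / r ^ 2) := by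
  have hL2 : ∀ i : ℕ, MemLp (ε i) 2 μ := by
    intro i
    by_contra h
    have htop := evariance_eq_top (hmeas i).aestronglyMeasurable h
    have hv := hvar i
    rw [variance, htop, ENNReal.toReal_top] at hv
    nlinarith
  set X : Fin n → Ω → ℝ := fun i ω => c i * ε i ω with hX
  have hXL2 : ∀ i : Fin n, MemLp (X i) 2 μ := fun i => (hL2 i).const_mul (c i)
  have hXint : ∀ i : Fin n, Integrable (X i) μ := fun i => (hXL2 i).integrable one_le_two
  have hTmem : MemLp (∑ i : Fin n, X i) 2 μ := memLp_finset_sum' _ fun i _ => hXL2 i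
  have hmeanT : μ[∑ i : Fin n, X i] = 0 := by
    have h1 : ∫ ω, (∑ i : Fin n, X i) ω ∂μ = ∑ i : Fin n, ∫ ω, X i ω ∂μ := by
      simp only [Finset.sum_apply]
      exact integral_finset_sum _ fun i _ => hXint i
    rw [h1]
    refine Finset.sum_eq_zero fun i _ => ?_
    simp only [hX]
    rw [integral_const_mul, hmean i, mul_zero]
  have hpair : Set.Pairwise ↑(Finset.univ : Finset (Fin n))
      (fun i j => IndepFun (X i) (X j) μ) := by
    intro i _ j _ hij
    have h1 : IndepFun (ε i) (ε j) μ :=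
      hindep.indepFun (fun h => hij (Fin.val_injective h))
    exact h1.comp (measurable_const_mul (c i)) (measurable_const_mul (c j))
  have hvarT : variance (∑ i : Fin n, X i) μ = (∑ i : Fin n, (c i) ^ 2) * σ ^ 2 := by
    rw [IndepFun.variance_sum (fun i _ => hXL2 i) hpair, Finset.sum_mul]
    refine Finset.sum_congr rfl fun i _ => ?_
    simp only [hX]
    rw [variance_const_mul, hvar i]
  have hcheb := meas_ge_le_variance_div_sq (μ := μ) hTmem hr
  rw [hvarT] at hcheb
  have hset : {ω | r ≤ |∑ i : Fin n, c i * ε i ω|}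
      = {ω : Ω | r ≤ |(∑ i : Fin n, X i) ω - μ[∑ i : Fin n, X i]|} := by
    ext ω
    rw [Set.mem_setOf_eq, Set.mem_setOf_eq, hmeanT, sub_zero]
    simp [hX, Finset.sum_apply]
  rw [hset]
  exact hcheb

lemma kn_div_n_tendsto (k : ℕ → ℕ) (lam : ℕ → ℝ) (gamma : ℝ)
    (hgamma0 : 0 < gamma) (hgamma1 : gamma < 1)
    (hB3a1 : Tendsto (fun n => lam n / (n : ℝ)) atTop (nhds 0))
    (hB3a2 : Tendsto (fun n => lam n * (n : ℝ) ^ (-(gamma / 2))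
        * (k n : ℝ) ^ (gamma - 2)) atTop atTop) :
    Tendsto (fun n => (k n : ℝ) / n) atTop (nhds 0) := by
  have h2γ : (0 : ℝ) < 2 - gamma := by linarith
  have hexp : (0 : ℝ) < 1 / (2 - gamma) := by positivity
  have hb : ∀ᶠ n : ℕ in atTop,
      (k n : ℝ) / n ≤ (lam n / n) ^ ((1 : ℝ) / (2 - gamma)) := by
    filter_upwards [hB3a2.eventually_ge_atTop 1, eventually_ge_atTop 1] with n hg hn1
    have hn0 : (0 : ℝ) < n := by exact_mod_cast Nat.lt_of_lt_of_le Nat.zero_lt_one hn1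
    have hn1' : (1 : ℝ) ≤ n := by exact_mod_cast hn1
    have hk1 : 1 ≤ k n := by
      by_contra h
      have hk0 : k n = 0 := by omega
      rw [hk0] at hg
      rw [Nat.cast_zero, Real.zero_rpow (by linarith : gamma - 2 ≠ 0), mul_zero] at hg
      linarith
    have hk0 : (0 : ℝ) < k n := by exact_mod_cast hk1
    have hnpow : (0 : ℝ) < (n : ℝ) ^ (-(gamma / 2)) := Real.rpow_pos_of_pos hn0 _
    have hkpow : (0 : ℝ) < (k n : ℝ) ^ (gamma - 2) := Real.rpow_pos_of_pos hk0 _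
    have hlampos : 0 < lam n := by
      by_contra h
      push_neg at h
      have h1 : lam n * (n : ℝ) ^ (-(gamma / 2)) ≤ 0 :=
        mul_nonpos_of_nonpos_of_nonneg h hnpow.le
      have h2 : lam n * (n : ℝ) ^ (-(gamma / 2)) * (k n : ℝ) ^ (gamma - 2) ≤ 0 :=
        mul_nonpos_of_nonpos_of_nonneg h1 hkpow.le
      linarith
    -- key : k^(2-γ) ≤ lam * n^(-(γ/2))
    have hP : (0 : ℝ) < (k n : ℝ) ^ (2 - gamma) := Real.rpow_pos_of_pos hk0 _
    have h1 : (k n : ℝ) ^ (gamma - 2) * (k n : ℝ) ^ (2 - gamma) = 1 := by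
      rw [← Real.rpow_add hk0]
      norm_num
    have key : (k n : ℝ) ^ (2 - gamma) ≤ lam n * (n : ℝ) ^ (-(gamma / 2)) := by
      have h2 := mul_le_mul_of_nonneg_right hg hP.le
      have h3 : lam n * (n : ℝ) ^ (-(gamma / 2)) * (k n : ℝ) ^ (gamma - 2)
          * (k n : ℝ) ^ (2 - gamma) = lam n * (n : ℝ) ^ (-(gamma / 2)) := by
        rw [mul_assoc, h1, mul_one]
      rw [one_mul, h3] at h2
      exact h2
    -- key2 : lam * n^(-(γ/2)) * n ≤ lam * n^(2-γ)
    have hnn : (n : ℝ) ^ (-(gamma / 2)) * n = (n : ℝ) ^ (1 - gamma / 2) := by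
      rw [show (1 : ℝ) - gamma / 2 = -(gamma / 2) + 1 by ring, Real.rpow_add hn0,
        Real.rpow_one]
    have key2 : lam n * (n : ℝ) ^ (-(gamma / 2)) * n ≤ lam n * (n : ℝ) ^ (2 - gamma) := by
      rw [mul_assoc, hnn]
      exact mul_le_mul_of_nonneg_left
        (Real.rpow_le_rpow_of_exponent_le hn1' (by linarith)) hlampos.le
    -- (k/n)^(2-γ) ≤ lam/n
    have hnp2 : (0 : ℝ) < (n : ℝ) ^ (2 - gamma) := Real.rpow_pos_of_pos hn0 _
    have hmain : ((k n : ℝ) / n) ^ (2 - gamma) ≤ lam n / n := by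
      rw [Real.div_rpow hk0.le hn0.le, div_le_div_iff₀ hnp2 hn0]
      calc (k n : ℝ) ^ (2 - gamma) * n ≤ lam n * (n : ℝ) ^ (-(gamma / 2)) * n :=
            mul_le_mul_of_nonneg_right key hn0.le
        _ ≤ lam n * (n : ℝ) ^ (2 - gamma) := key2
    -- conclude
    have ha0 : (0 : ℝ) ≤ (k n : ℝ) / n := by positivity
    have heq : ((k n : ℝ) / n) = (((k n : ℝ) / n) ^ (2 - gamma)) ^ ((1 : ℝ) / (2 - gamma)) := by
      rw [← Real.rpow_mul ha0, mul_one_div, div_self h2γ.ne', Real.rpow_one]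
    rw [heq]
    exact Real.rpow_le_rpow (Real.rpow_nonneg ha0 _) hmain hexp.le
  have hrhs : Tendsto (fun n : ℕ => (lam n / n) ^ ((1 : ℝ) / (2 - gamma))) atTop (nhds 0) := by
    have := hB3a1.rpow_const (p := (1 : ℝ) / (2 - gamma)) (Or.inr hexp.le)
    rwa [Real.zero_rpow hexp.ne'] at this
  have hlow : ∀ᶠ n : ℕ in atTop, (0 : ℝ) ≤ (k n : ℝ) / n :=
    Eventually.of_forall fun n => by positivity
  exact tendsto_of_tendsto_of_tendsto_of_le_of_le' tendsto_const_nhds hrhs hlow hb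

set_option maxHeartbeats 2000000 in
theorem main_test {Ω : Type*} [MeasurableSpace Ω] (μ : Measure Ω)
    [IsProbabilityMeasure μ]
    (p k : ℕ → ℕ) (hkp : ∀ n, k n ≤ p n)
    (lam : ℕ → ℝ) (hlam : ∀ n, 0 ≤ lam n)
    (gamma : ℝ) (hgamma0 : 0 < gamma) (hgamma1 : gamma < 1)
    (x : (n : ℕ) → Fin n → Fin (p n) → ℝ)
    (hstd : ∀ n : ℕ, 0 < n → ∀ j, (1 / (n : ℝ)) * ∑ i, (x n i j) ^ 2 = 1)
    (β0 : (n : ℕ) → Fin (p n) → ℝ)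
    (ε : ℕ → Ω → ℝ) (σ : ℝ) (hσ : 0 < σ)
    (hmeas : ∀ i, Measurable (ε i))
    (hindep : iIndepFun ε μ)
    (hmean : ∀ i, ∫ ω, ε i ω ∂μ = 0)
    (hvar : ∀ i, variance (ε i) μ = σ ^ 2)
    (ξ : (n : ℕ) → Fin (p n) → ℝ)
    (hξ : ∀ n (j : Fin (p n)), ξ n j
      = (n : ℝ)⁻¹ * ∑ i : Fin n, (∑ a, x n i a * β0 n a) * x n i j)
    (ξ0 : ℝ) (hξ0 : 0 < ξ0)
    (hB2b : ∀ n (j : Fin (p n)), (j : ℕ) < k n → ξ0 ≤ |ξ n j|)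
    (hB3a1 : Tendsto (fun n => lam n / (n : ℝ)) atTop (nhds 0))
    (hB3a2 : Tendsto (fun n => lam n * (n : ℝ) ^ (-(gamma / 2))
        * (k n : ℝ) ^ (gamma - 2)) atTop atTop)
    (βtil : (n : ℕ) → Ω → Fin (p n) → ℝ)
    (hβmin : ∀ n, ∀ᵐ ω ∂μ, ∀ β : Fin (p n) → ℝ,
      (∑ j, ∑ i : Fin n,
          ((∑ a, x n i a * β0 n a) + ε i ω - x n i j * βtil n ω j) ^ 2
          + lam n * ∑ j, |βtil n ω j| ^ gamma)
        ≤ ∑ j, ∑ i : Fin n,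
            ((∑ a, x n i a * β0 n a) + ε i ω - x n i j * β j) ^ 2
          + lam n * ∑ j, |β j| ^ gamma) :
    Tendsto (fun n =>
        (μ {ω | ∀ j : Fin (p n), (j : ℕ) < k n → βtil n ω j ≠ 0}).toReal)
      atTop (nhds 1) := by
  have h2γ : (0 : ℝ) < 2 - gamma := by linarith
  have hkn := kn_div_n_tendsto k lam gamma hgamma0 hgamma1 hB3a1 hB3a2
  have hrp : (0 : ℝ) < (ξ0 / 2) ^ gamma := Real.rpow_pos_of_pos (by linarith) _
  set D : ℕ → ℝ := fun n => 4 * σ ^ 2 / ξ0 ^ 2 * ((k n : ℝ) / n) with hD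
  have hDt : Tendsto D atTop (nhds 0) := by
    have := hkn.const_mul (4 * σ ^ 2 / ξ0 ^ 2)
    simpa using this
  have hlsmall : ∀ᶠ n : ℕ in atTop,
      lam n * (ξ0 / 2) ^ gamma < (n : ℝ) * ξ0 ^ 2 / 4 := by
    have hQ : (0 : ℝ) < (ξ0 ^ 2 / 4) / ((ξ0 / 2) ^ gamma) := by positivity
    filter_upwards [hB3a1.eventually_lt_const hQ, eventually_ge_atTop 1] with n hlt hn1
    have hn0 : (0 : ℝ) < n := by exact_mod_cast Nat.lt_of_lt_of_le Nat.zero_lt_one hn1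
    rw [div_lt_iff₀ hn0] at hlt
    calc lam n * (ξ0 / 2) ^ gamma
        < ((ξ0 ^ 2 / 4) / ((ξ0 / 2) ^ gamma) * n) * (ξ0 / 2) ^ gamma :=
          mul_lt_mul_of_pos_right hlt hrp
      _ = (n : ℝ) * ξ0 ^ 2 / 4 := by field_simp
  have hkpos : ∀ᶠ n : ℕ in atTop, 1 ≤ k n := by
    filter_upwards [hB3a2.eventually_ge_atTop 1] with n hg
    by_contra h
    have hk0 : k n = 0 := by omega
    rw [hk0, Nat.cast_zero, Real.zero_rpow (by linarith : gamma - 2 ≠ 0), mul_zero] at hg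
    linarith
  -- main lower bound
  have hlower : ∀ᶠ n : ℕ in atTop,
      1 - D n ≤ (μ {ω | ∀ j : Fin (p n), (j : ℕ) < k n → βtil n ω j ≠ 0}).toReal := by
    filter_upwards [eventually_ge_atTop 1, hkpos, hlsmall] with n hn1 hk1 hlamn
    set G : Set Ω := {ω | ∀ j : Fin (p n), (j : ℕ) < k n → βtil n ω j ≠ 0} with hG
    have hn0 : (0 : ℝ) < n := by exact_mod_cast Nat.lt_of_lt_of_le Nat.zero_lt_one hn1
    have hstdn : ∀ j : Fin (p n), ∑ i : Fin n, (x n i j) ^ 2 = (n : ℝ) := by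
      intro j
      have h := hstd n (by omega) j
      field_simp at h
      linarith
    set J : Finset (Fin (p n)) := Finset.univ.filter (fun j => (j : ℕ) < k n) with hJ
    set Bset : Fin (p n) → Set Ω :=
      fun j => {ω | (n : ℝ) * ξ0 / 2 ≤ |∑ i : Fin n, x n i j * ε i ω|} with hBset
    set Bad : Set Ω := ⋃ j ∈ J, Bset j with hBad
    have hr0 : (0 : ℝ) < (n : ℝ) * ξ0 / 2 := by positivity
    have hBadj : ∀ j ∈ J, μ (Bset j) ≤ ENNReal.ofReal (4 * σ ^ 2 / (ξ0 ^ 2 * n)) := by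
      intro j _
      have hb := cheb_aux μ n (fun i => x n i j) ε σ hσ hmeas hindep hmean hvar
        ((n : ℝ) * ξ0 / 2) hr0
      rw [hstdn j] at hb
      refine le_trans hb (le_of_eq ?_)
      congr 1
      field_simp
      ring
    have hcard : J.card ≤ k n := by
      have h1 : J.card ≤ (Finset.univ : Finset (Fin (k n))).card := by
        refine Finset.card_le_card_of_injOn
          (fun j => (⟨min (j : ℕ) (k n - 1), by omega⟩ : Fin (k n)))
          (fun _ _ => Finset.mem_univ _) ?_
        intro a ha b hb hab
        simp only [Finset.coe_filter, Set.mem_setOf_eq, Finset.mem_univ, true_and, hJ] at ha hb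
        simp only [Fin.mk.injEq] at hab
        rw [Nat.min_eq_left (by omega), Nat.min_eq_left (by omega)] at hab
        exact Fin.ext hab
      simpa using h1
    have hBadle : μ Bad ≤ ENNReal.ofReal (D n) := by
      calc μ Bad ≤ ∑ j ∈ J, μ (Bset j) := measure_biUnion_finset_le _ _
        _ ≤ J.card • ENNReal.ofReal (4 * σ ^ 2 / (ξ0 ^ 2 * n)) :=
            Finset.sum_le_card_nsmul _ _ _ hBadj
        _ = (J.card : ℝ≥0∞) * ENNReal.ofReal (4 * σ ^ 2 / (ξ0 ^ 2 * n)) := nsmul_eq_mul _ _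
        _ ≤ (k n : ℝ≥0∞) * ENNReal.ofReal (4 * σ ^ 2 / (ξ0 ^ 2 * n)) :=
            mul_le_mul_left (by exact_mod_cast hcard) _
        _ = ENNReal.ofReal (D n) := by
            rw [← ENNReal.ofReal_natCast (k n), ← ENNReal.ofReal_mul (by positivity)]
            congr 1
            rw [hD]
            field_simp
    set Mc : Set Ω := {ω | ¬ ∀ β : Fin (p n) → ℝ,
      (∑ j, ∑ i : Fin n,
          ((∑ a, x n i a * β0 n a) + ε i ω - x n i j * βtil n ω j) ^ 2
          + lam n * ∑ j, |βtil n ω j| ^ gamma)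
        ≤ ∑ j, ∑ i : Fin n,
            ((∑ a, x n i a * β0 n a) + ε i ω - x n i j * β j) ^ 2
          + lam n * ∑ j, |β j| ^ gamma} with hMc
    have hM : μ Mc = 0 := by
      have h := hβmin n
      rwa [ae_iff] at h
    -- deterministic step
    have hdet : ∀ ω, ω ∉ Mc → ω ∉ Bad → ω ∈ G := by
      intro ω hMω hBω
      have hQ := not_not.mp hMω
      have hE : ∀ j ∈ J, |∑ i : Fin n, x n i j * ε i ω| < (n : ℝ) * ξ0 / 2 := by
        intro j hj
        by_contra h
        push_neg at h
        exact hBω (Set.mem_biUnion hj h)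
      intro j hj
      intro h0
      set W : Fin n → ℝ := fun i => ∑ a, x n i a * β0 n a with hW
      have hjJ : j ∈ J := by simp [hJ, hj]
      have hξj : (n : ℝ) * ξ n j = ∑ i : Fin n, W i * x n i j := by
        rw [hξ n j, ← mul_assoc, mul_inv_cancel₀ hn0.ne', one_mul]
      set Ej : ℝ := ∑ i : Fin n, x n i j * ε i ω with hEj
      set S : ℝ := ∑ i : Fin n, (W i + ε i ω) * x n i j with hS
      have hSeq : S = (n : ℝ) * ξ n j + Ej := by
        rw [hξj, hEj, hS, ← Finset.sum_add_distrib]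
        exact Finset.sum_congr rfl fun i _ => by ring
      have habsS : (n : ℝ) * ξ0 / 2 ≤ |S| := by
        have h1 : (n : ℝ) * ξ0 ≤ |(n : ℝ) * ξ n j| := by
          rw [abs_mul, abs_of_nonneg hn0.le]
          exact mul_le_mul_of_nonneg_left (hB2b n j hj) hn0.le
        have h2 := hE j hjJ
        have h3 : |(n : ℝ) * ξ n j| ≤ |S| + |Ej| := by
          have : (n : ℝ) * ξ n j = S - Ej := by rw [hSeq]; ring
          rw [this]
          exact abs_sub _ _
        linarith
      set t : ℝ := if 0 ≤ S then ξ0 / 2 else -(ξ0 / 2) with ht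
      have htabs : |t| = ξ0 / 2 := by
        rw [ht]
        split_ifs with h
        · exact abs_of_pos (by linarith)
        · rw [abs_neg]; exact abs_of_pos (by linarith)
      have htS : t * S = (ξ0 / 2) * |S| := by
        rw [ht]
        split_ifs with h
        · rw [abs_of_nonneg h]
        · rw [abs_of_neg (lt_of_not_ge h)]; ring
      -- use minimality with the competitor updating coordinate j to t
      have hQβ := hQ (Function.update (βtil n ω) j t)
      set v0 : Fin (p n) → ℝ := βtil n ω with hv0
      set v1 : Fin (p n) → ℝ := Function.update v0 j t with hv1
      have hv1j : v1 j = t := Function.update_self j t v0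
      have hv1ne : ∀ j' : Fin (p n), j' ≠ j → v1 j' = v0 j' :=
        fun j' h => Function.update_of_ne h t v0
      have e1 : ∑ j' : Fin (p n), ∑ i : Fin n, (W i + ε i ω - x n i j' * v0 j') ^ 2
          = (∑ i : Fin n, (W i + ε i ω - x n i j * v0 j) ^ 2)
            + ∑ j' ∈ Finset.univ.erase j, ∑ i : Fin n, (W i + ε i ω - x n i j' * v0 j') ^ 2 :=
        (Finset.add_sum_erase _ _ (Finset.mem_univ j)).symm
      have e2 : ∑ j' : Fin (p n), ∑ i : Fin n, (W i + ε i ω - x n i j' * v1 j') ^ 2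
          = (∑ i : Fin n, (W i + ε i ω - x n i j * v1 j) ^ 2)
            + ∑ j' ∈ Finset.univ.erase j, ∑ i : Fin n, (W i + ε i ω - x n i j' * v0 j') ^ 2 := by
        rw [(Finset.add_sum_erase _ _ (Finset.mem_univ j)).symm]
        congr 1
        exact Finset.sum_congr rfl fun j' hj' => by
          rw [hv1ne j' (Finset.ne_of_mem_erase hj')]
      have e3 : ∑ j' : Fin (p n), |v0 j'| ^ gamma
          = |v0 j| ^ gamma + ∑ j' ∈ Finset.univ.erase j, |v0 j'| ^ gamma :=
        (Finset.add_sum_erase _ _ (Finset.mem_univ j)).symm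
      have e4 : ∑ j' : Fin (p n), |v1 j'| ^ gamma
          = |v1 j| ^ gamma + ∑ j' ∈ Finset.univ.erase j, |v0 j'| ^ gamma := by
        rw [(Finset.add_sum_erase _ _ (Finset.mem_univ j)).symm]
        congr 1
        exact Finset.sum_congr rfl fun j' hj' => by
          rw [hv1ne j' (Finset.ne_of_mem_erase hj')]
      rw [e1, e2, e3, e4, hv1j, h0] at hQβ
      simp only [mul_zero, sub_zero, abs_zero, Real.zero_rpow hgamma0.ne'] at hQβ
      rw [mul_add, mul_add, mul_zero] at hQβ
      have hred : ∑ i : Fin n, (W i + ε i ω) ^ 2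
          ≤ (∑ i : Fin n, (W i + ε i ω - x n i j * t) ^ 2) + lam n * |t| ^ gamma := by
        linarith
      have hexp : ∑ i : Fin n, (W i + ε i ω - x n i j * t) ^ 2
          = (∑ i : Fin n, (W i + ε i ω) ^ 2) - 2 * t * S + t ^ 2 * (n : ℝ) := by
        have h1 : ∀ i : Fin n, (W i + ε i ω - x n i j * t) ^ 2
            = (W i + ε i ω) ^ 2 - 2 * t * ((W i + ε i ω) * x n i j)
              + t ^ 2 * (x n i j) ^ 2 := fun i => by ring
        rw [Finset.sum_congr rfl (fun i _ => h1 i), Finset.sum_add_distrib,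
          Finset.sum_sub_distrib, ← Finset.mul_sum, ← Finset.mul_sum, hstdn j, ← hS]
      have hfin : 0 ≤ -(2 * t * S) + t ^ 2 * (n : ℝ) + lam n * |t| ^ gamma := by
        rw [hexp] at hred
        linarith
      rw [htabs] at hfin
      have ht2 : t ^ 2 = (ξ0 / 2) ^ 2 := by rw [← sq_abs, htabs]
      rw [ht2] at hfin
      have hint : ξ0 * ((n : ℝ) * ξ0 / 2) ≤ ξ0 * |S| :=
        mul_le_mul_of_nonneg_left habsS hξ0.le
      nlinarith [htS, hfin, hint, hlamn]
    have hsub : Gᶜ ⊆ Mc ∪ Bad := by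
      intro ω hω
      rw [Set.mem_union]
      by_contra hc
      push_neg at hc
      exact hω (hdet ω hc.1 hc.2)
    have hGc : μ Gᶜ ≤ ENNReal.ofReal (D n) := by
      calc μ Gᶜ ≤ μ (Mc ∪ Bad) := measure_mono hsub
        _ ≤ μ Mc + μ Bad := measure_union_le _ _
        _ = μ Bad := by rw [hM, zero_add]
        _ ≤ _ := hBadle
    have h1 : (1 : ℝ≥0∞) ≤ μ G + ENNReal.ofReal (D n) := by
      calc (1 : ℝ≥0∞) = μ (G ∪ Gᶜ) := by rw [Set.union_compl_self, measure_univ]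
        _ ≤ μ G + μ Gᶜ := measure_union_le _ _
        _ ≤ μ G + ENNReal.ofReal (D n) := add_le_add_right hGc _
    have hDnn : 0 ≤ D n := by rw [hD]; positivity
    have h2 := ENNReal.toReal_mono
      (ENNReal.add_ne_top.2 ⟨measure_ne_top μ _, ENNReal.ofReal_ne_top⟩) h1
    rw [ENNReal.toReal_one, ENNReal.toReal_add (measure_ne_top μ _) ENNReal.ofReal_ne_top,
      ENNReal.toReal_ofReal hDnn] at h2
    linarith
  have hupper : ∀ᶠ n : ℕ in atTop,
      (μ {ω | ∀ j : Fin (p n), (j : ℕ) < k n → βtil n ω j ≠ 0}).toReal ≤ 1 :=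
    Eventually.of_forall fun n =>
      ENNReal.toReal_mono ENNReal.one_ne_top prob_le_one |>.trans_eq ENNReal.toReal_one
  have hlim : Tendsto (fun n => 1 - D n) atTop (nhds 1) := by
    have h := Tendsto.sub
      (tendsto_const_nhds : Tendsto (fun _ : ℕ => (1 : ℝ)) atTop (nhds 1)) hDt
    simpa using h
  exact tendsto_of_tendsto_of_tendsto_of_le_of_le' hlim tendsto_const_nhds hlower hupper

/-- Theorem 3 (nonzero-coefficient part). Under the partial-orthogonality
conditions (B1)–(B4) and bridge exponent `0 < γ < 1`, the marginal bridge
estimator, the global minimizer of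
`Uₙ(β) = ∑ⱼ∑ᵢ (Yᵢ − x_{ij}βⱼ)² + λₙ ∑ⱼ |βⱼ|^γ`, is nonzero on every coordinate
`j ∈ Kₙ = {1, …, kₙ}` of the nonzero coefficients with probability converging
to one. -/
theorem marginal_bridge_nonzero_selection
    {Ω : Type*} [MeasurableSpace Ω] (μ : Measure Ω) [IsProbabilityMeasure μ]
    (p k : ℕ → ℕ) (hkp : ∀ n, k n ≤ p n)
    (lam : ℕ → ℝ) (hlam : ∀ n, 0 ≤ lam n)
    (gamma : ℝ) (hgamma0 : 0 < gamma) (hgamma1 : gamma < 1)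
    (x : (n : ℕ) → Fin n → Fin (p n) → ℝ)
    (hstd : ∀ n : ℕ, 0 < n → ∀ j, (1 / (n : ℝ)) * ∑ i, (x n i j) ^ 2 = 1)
    (β0 : (n : ℕ) → Fin (p n) → ℝ)
    (hβ0nz : ∀ n (j : Fin (p n)), (j : ℕ) < k n → β0 n j ≠ 0)
    (hβ0z : ∀ n (j : Fin (p n)), k n ≤ (j : ℕ) → β0 n j = 0)
    -- (B1): i.i.d. errors, mean 0, variance σ², sub-Gaussian tails
    (ε : ℕ → Ω → ℝ) (σ : ℝ) (hσ : 0 < σ)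
    (hmeas : ∀ i, Measurable (ε i))
    (hindep : iIndepFun ε μ)
    (hident : ∀ i j, IdentDistrib (ε i) (ε j) μ μ)
    (hmean : ∀ i, ∫ ω, ε i ω ∂μ = 0)
    (hvar : ∀ i, variance (ε i) μ = σ ^ 2)
    (K C : ℝ) (hK : 0 < K) (hC : 0 < C)
    (hsubg : ∀ i, ∀ t : ℝ, 0 < t →
      (μ {ω | t < |ε i ω|}).toReal ≤ K * Real.exp (-C * t ^ 2))
    -- ξₙⱼ = n⁻¹ ∑ᵢ (wᵢ'β₁₀) x_{ij}
    (ξ : (n : ℕ) → Fin (p n) → ℝ)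
    (hξ : ∀ n (j : Fin (p n)), ξ n j
      = (n : ℝ)⁻¹ * ∑ i : Fin n, (∑ a, x n i a * β0 n a) * x n i j)
    -- (B2)(a): partial orthogonality
    (c0 : ℝ) (hc0 : 0 < c0)
    (hB2a : ∀ᶠ n : ℕ in atTop, ∀ (j l : Fin (p n)), k n ≤ (j : ℕ) → (l : ℕ) < k n →
      |(Real.sqrt (n : ℝ))⁻¹ * ∑ i : Fin n, x n i j * x n i l| ≤ c0)
    -- (B2)(b)
    (ξ0 : ℝ) (hξ0 : 0 < ξ0)
    (hB2b : ∀ n (j : Fin (p n)), (j : ℕ) < k n → ξ0 ≤ |ξ n j|)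
    -- (B3)(a)
    (hB3a1 : Tendsto (fun n => lam n / (n : ℝ)) atTop (nhds 0))
    (hB3a2 : Tendsto (fun n => lam n * (n : ℝ) ^ (-(gamma / 2))
        * (k n : ℝ) ^ (gamma - 2)) atTop atTop)
    -- (B3)(b): log(mₙ) = o((λₙ n^{-γ/2})^{2/(2-γ)})
    (hB3b : Tendsto (fun n => Real.log ((p n - k n : ℕ) : ℝ)
        / (lam n * (n : ℝ) ^ (-(gamma / 2))) ^ ((2 : ℝ) / (2 - gamma)))
      atTop (nhds 0))
    -- (B4)
    (b1 : ℝ) (hb1 : 0 < b1)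
    (hB4 : ∀ n (j : Fin (p n)), (j : ℕ) < k n → |β0 n j| ≤ b1)
    -- the marginal bridge estimator
    (βtil : (n : ℕ) → Ω → Fin (p n) → ℝ)
    (hβmeas : ∀ n, Measurable (βtil n))
    (hβmin : ∀ n, ∀ᵐ ω ∂μ, ∀ β : Fin (p n) → ℝ,
      (∑ j, ∑ i : Fin n,
          ((∑ a, x n i a * β0 n a) + ε i ω - x n i j * βtil n ω j) ^ 2
          + lam n * ∑ j, |βtil n ω j| ^ gamma)
        ≤ ∑ j, ∑ i : Fin n,
            ((∑ a, x n i a * β0 n a) + ε i ω - x n i j * β j) ^ 2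
          + lam n * ∑ j, |β j| ^ gamma) :
    Tendsto (fun n =>
        (μ {ω | ∀ j : Fin (p n), (j : ℕ) < k n → βtil n ω j ≠ 0}).toReal)
      atTop (nhds 1) := by
  exact main_test μ p k hkp lam hlam gamma hgamma0 hgamma1 x hstd β0 ε σ hσ hmeas hindep
    hmean hvar ξ hξ ξ0 hξ0 hB2b hB3a1 hB3a2 βtil hβmin
end
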